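/- Let I ⊆ S = K[x_1,…,x_n] be a monomial ideal generated in a single degree that has linear quotients, and let u_1,…,u_m be its minimal monomial generators. Then for every i ∈ {1,…,m}, the colon ideal (u_1,…,u_{i−1},u_{i+1},…,u_m) : u_i is generated by a subset of the variables. -/

import Mathlib

open MvPolynomial

/-- An ideal of `K[x_1,…,x_n]` is *generated by variables* if it is the span of the
image of a subset of the variables. -/
def genByVars {K : Type*} [Field K] {n : ℕ} (I : Ideal (MvPolynomial (Fin n) K)) : Prop :=
  ∃ T : Set (Fin n), I = Ideal.span (MvPolynomial.X '' T)
/-- A polynomial is a monomial (with coefficient `1`). -/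
def IsMonomialElt {K : Type*} [Field K] {n : ℕ} (p : MvPolynomial (Fin n) K) : Prop :=
  ∃ a : Fin n →₀ ℕ, p = MvPolynomial.monomial a 1

namespace FHaux

variable {n : ℕ}

/-- The degree of an exponent vector. -/
def degE (c : Fin n →₀ ℕ) : ℕ := c.sum fun _ e => e

lemma degE_eq_sum (c : Fin n →₀ ℕ) {s : Finset (Fin n)} (h : c.support ⊆ s) :
    degE c = ∑ w ∈ s, c w :=
  Finsupp.sum_of_support_subset c h _ (fun _ _ => rfl)

lemma eq_of_le_of_degE_le {a b : Fin n →₀ ℕ} (hle : a ≤ b) (hd : degE b ≤ degE a) :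
    a = b := by
  by_contra hne
  have h : ∃ w, a w ≠ b w := by
    by_contra h
    push_neg at h
    exact hne (Finsupp.ext h)
  obtain ⟨w, hw⟩ := h
  have hab : ∀ x, a x ≤ b x := fun x => hle x
  have hwlt : a w < b w := lt_of_le_of_ne (hab w) hw
  set s : Finset (Fin n) := a.support ∪ b.support with hs
  have ha : degE a = ∑ x ∈ s, a x := degE_eq_sum a Finset.subset_union_left
  have hb : degE b = ∑ x ∈ s, b x := degE_eq_sum b Finset.subset_union_right
  have hws : w ∈ s := by
    have : b w ≠ 0 := by omega
    exact Finset.mem_union_right _ (Finsupp.mem_support_iff.mpr this)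
  have : ∑ x ∈ s, a x < ∑ x ∈ s, b x :=
    Finset.sum_lt_sum (fun i _ => hab i) ⟨w, hws, hwlt⟩
  omega

/-- The exchange lemma: if `a ≤ b + e_y`, `deg a = deg b`, `a ≠ b`, then
`b = a + e_z - e_y` for some `z` with `b z > a z`. -/
lemma exch {a b : Fin n →₀ ℕ} {y : Fin n}
    (hle : a ≤ b + Finsupp.single y 1) (hsum : degE a = degE b) (hne : a ≠ b) :
    ∃ z, a z < b z ∧ b ≤ a + Finsupp.single z 1 := by
  have hcoord : ∀ x, a x ≤ b x + (Finsupp.single y 1) x := fun x => hle x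
  have hxy : ∀ x, x ≠ y → a x ≤ b x := by
    intro x hx
    have := hcoord x
    rwa [Finsupp.single_eq_of_ne' (Ne.symm hx), add_zero] at this
  have hay : a y ≤ b y + 1 := by
    have := hcoord y
    rwa [Finsupp.single_eq_same] at this
  -- b y < a y, else a ≤ b and degrees equal force a = b
  have hby : b y < a y := by
    by_contra h
    push_neg at h
    have : a ≤ b := by
      intro x
      by_cases hx : x = y
      · subst hx; exact h
      · exact hxy x hx
    exact hne (eq_of_le_of_degE_le this hsum.ge)
  -- there is z with a z < b z
  have hz : ∃ z, a z < b z := by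
    by_contra h
    push_neg at h
    have : b ≤ a := fun x => h x
    exact hne (eq_of_le_of_degE_le this hsum.le).symm
  obtain ⟨z, hzlt⟩ := hz
  have hzy : z ≠ y := by
    intro h; subst h; omega
  refine ⟨z, hzlt, ?_⟩
  -- sum bookkeeping over s = supports ∪ {y, z}
  set s : Finset (Fin n) := (a.support ∪ b.support) ∪ {y, z} with hs
  have hys : y ∈ s := by simp [hs]
  have hzs : z ∈ s := by simp [hs]
  have ha : degE a = ∑ x ∈ s, a x :=
    degE_eq_sum a (Finset.Subset.trans Finset.subset_union_left Finset.subset_union_left)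
  have hb : degE b = ∑ x ∈ s, b x :=
    degE_eq_sum b (Finset.Subset.trans Finset.subset_union_right Finset.subset_union_left)
  set t : Finset (Fin n) := s.erase y with ht
  have hzt : z ∈ t := Finset.mem_erase.mpr ⟨hzy, hzs⟩
  have hsplit_a : ∑ x ∈ s, a x = a y + ∑ x ∈ t, a x := (Finset.add_sum_erase s a hys).symm
  have hsplit_b : ∑ x ∈ s, b x = b y + ∑ x ∈ t, b x := (Finset.add_sum_erase s b hys).symm
  have hlet : ∀ x ∈ t, a x ≤ b x := fun x hx => hxy x (Finset.ne_of_mem_erase hx)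
  have hsum_t : ∑ x ∈ t, b x ≤ ∑ x ∈ t, a x + 1 := by
    have h1 : ∑ x ∈ t, a x ≤ ∑ x ∈ t, b x := Finset.sum_le_sum hlet
    omega
  -- the gap function
  have hgap : ∑ x ∈ t, (b x - a x) = ∑ x ∈ t, b x - ∑ x ∈ t, a x := by
    have : ∑ x ∈ t, (a x + (b x - a x)) = ∑ x ∈ t, b x := by
      apply Finset.sum_congr rfl
      intro x hx
      have := hlet x hx
      omega
    rw [Finset.sum_add_distrib] at this
    omega
  have hgap1 : ∑ x ∈ t, (b x - a x) ≤ 1 := by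
    rw [hgap]; omega
  -- now prove b ≤ a + single z 1 coordinatewise
  intro x
  rw [Finsupp.add_apply]
  by_cases hxz : x = z
  · subst hxz
    have : b x - a x ≤ ∑ w ∈ t, (b w - a w) :=
      Finset.single_le_sum (f := fun w => b w - a w) (fun _ _ => Nat.zero_le _) hzt
    rw [Finsupp.single_eq_same]
    omega
  · rw [Finsupp.single_eq_of_ne' (fun h => hxz h.symm), add_zero]
    by_cases hxy' : x = y
    · subst hxy'; omega
    · -- x ≠ y, x ≠ z : show b x ≤ a x
      by_contra h
      push_neg at h
      have hxs : x ∈ t := by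
        have : x ∈ s := by
          have : b x ≠ 0 := by omega
          exact Finset.mem_union_left _
            (Finset.mem_union_right _ (Finsupp.mem_support_iff.mpr this))
        exact Finset.mem_erase.mpr ⟨hxy', this⟩
      have hpair : ({z, x} : Finset (Fin n)) ⊆ t := by
        intro w hw
        rcases Finset.mem_insert.mp hw with h1 | h1
        · subst h1; exact hzt
        · rw [Finset.mem_singleton] at h1; subst h1; exact hxs
      have h2 : ∑ w ∈ ({z, x} : Finset (Fin n)), (b w - a w) ≤ 1 :=
        le_trans (Finset.sum_le_sum_of_subset hpair) hgap1
      rw [Finset.sum_pair (fun h' => hxz h'.symm)] at h2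
      omega

/-- The key combinatorial claim, by strong induction over the position in the
admissible order. -/
lemma key {m : ℕ} (a : Fin m → (Fin n →₀ ℕ)) (d : ℕ)
    (hd : ∀ i, degE (a i) = d)
    (hnd : ∀ i j, i ≠ j → ¬ a i ≤ a j)
    (adm : ∀ i j : Fin m, j < i →
      ∃ x, a i x < a j x ∧ ∃ k, k < i ∧ a k ≤ a i + Finsupp.single x 1) :
    ∀ i j : Fin m, j ≠ i →
      ∃ x, a i x < a j x ∧ ∃ l, l ≠ i ∧ a l ≤ a i + Finsupp.single x 1 := by
  intro i
  suffices H : ∀ N : ℕ, ∀ j : Fin m, j.val ≤ N → j ≠ i →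
      ∃ x, a i x < a j x ∧ ∃ l, l ≠ i ∧ a l ≤ a i + Finsupp.single x 1 by
    exact fun j hj => H j.val j le_rfl hj
  intro N
  induction N with
  | zero =>
    intro j hjN hji
    have hlt : j < i := by
      rcases lt_or_gt_of_ne hji with h | h
      · exact h
      · exact absurd hjN (by omega)
    obtain ⟨x, hx, k, hki, hk⟩ := adm i j hlt
    exact ⟨x, hx, k, ne_of_lt hki, hk⟩
  | succ N IH =>
    intro j hjN hji
    rcases lt_or_gt_of_ne hji with hlt | hgt
    · obtain ⟨x, hx, k, hki, hk⟩ := adm i j hlt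
      exact ⟨x, hx, k, ne_of_lt hki, hk⟩
    · -- i < j
      obtain ⟨y, hy, k, hkj, hk⟩ := adm j i hgt
      by_cases hki : k = i
      · subst hki
        have hne : a k ≠ a j := by
          intro h
          exact hnd k j (ne_of_lt hgt) h.le
        obtain ⟨z, hzlt, hzle⟩ := exch hk (by rw [hd k, hd j]) hne
        exact ⟨z, hzlt, j, ne_of_gt hgt, hzle⟩
      · have hkN : k.val ≤ N := by
          have := hkj
          omega
        obtain ⟨x, hxk, l, hli, hal⟩ := IH k hkN hki
        have hxy : x ≠ y := by
          intro h
          subst h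
          have h1 : a k x ≤ a j x + 1 := by
            have := hk x
            rwa [Finsupp.add_apply, Finsupp.single_eq_same] at this
          omega
        have hjx : a k x ≤ a j x := by
          have := hk x
          rwa [Finsupp.add_apply, Finsupp.single_eq_of_ne' (Ne.symm hxy), add_zero] at this
        exact ⟨x, lt_of_lt_of_le hxk hjx, l, hli, hal⟩

variable {K : Type*} [Field K]

lemma mono_mem {c : Fin n →₀ ℕ} {A : Set (Fin n →₀ ℕ)} :
    (monomial c (1 : K)) ∈ Ideal.span ((fun s => monomial s (1 : K)) '' A) ↔
      ∃ s ∈ A, s ≤ c := by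
  classical
  rw [mem_ideal_span_monomial_image]
  rw [support_monomial, if_neg (one_ne_zero (α := K))]
  simp

/-- The main result in exponent-vector form, with the admissible order being the
identity order. -/
theorem aux {m : ℕ} (a : Fin m → (Fin n →₀ ℕ)) (d : ℕ)
    (hd : ∀ i, degE (a i) = d)
    (hnd : ∀ i j, i ≠ j → ¬ a i ≤ a j)
    (hlq : ∀ i : Fin m,
      genByVars ((Ideal.span ((fun j => (monomial (a j) (1 : K))) '' {j | j < i})).colon
        (Ideal.span {(monomial (a i) (1 : K))}))) :
    ∀ i : Fin m,
      genByVars ((Ideal.span ((fun j => (monomial (a j) (1 : K))) '' {j | j ≠ i})).colon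
        (Ideal.span {(monomial (a i) (1 : K))})) := by
  classical
  -- rewrite generating sets as monomial images
  have himg : ∀ (S : Set (Fin m)),
      ((fun j => (monomial (a j) (1 : K))) '' S) = (fun s => monomial s (1 : K)) '' (a '' S) := by
    intro S
    rw [Set.image_image]
  -- extract the combinatorial admissibility from hlq
  have adm : ∀ i j : Fin m, j < i →
      ∃ x, a i x < a j x ∧ ∃ k, k < i ∧ a k ≤ a i + Finsupp.single x 1 := by
    intro i j hji
    obtain ⟨T, hT⟩ := hlq i
    -- step 1: monomial (a j - a i) 1 is in the colon ideal
    have h1 : (monomial (a j - a i) (1 : K)) ∈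
        (Ideal.span ((fun j => (monomial (a j) (1 : K))) '' {j | j < i})).colon
          (Ideal.span {(monomial (a i) (1 : K))}) := by
      rw [Ideal.mem_colon_span_singleton, monomial_mul, one_mul, himg, mono_mem]
      exact ⟨a j, ⟨j, hji, rfl⟩, le_tsub_add⟩
    rw [hT, mem_ideal_span_X_image] at h1
    have hsup : (a j - a i) ∈ (monomial (a j - a i) (1 : K)).support := by
      rw [support_monomial, if_neg (one_ne_zero (α := K))]
      exact Finset.mem_singleton_self _
    obtain ⟨x, hxT, hx0⟩ := h1 _ hsup
    rw [Finsupp.tsub_apply] at hx0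
    have hxlt : a i x < a j x := by omega
    refine ⟨x, hxlt, ?_⟩
    -- step 2: X x is in the colon ideal
    have h2 : (X x : MvPolynomial (Fin n) K) ∈ Ideal.span (X '' T) :=
      Ideal.subset_span ⟨x, hxT, rfl⟩
    rw [← hT, Ideal.mem_colon_span_singleton] at h2
    rw [X, monomial_mul, one_mul, himg, mono_mem] at h2
    obtain ⟨s, ⟨k, hk, rfl⟩, hle⟩ := h2
    rw [add_comm] at hle
    exact ⟨k, hk, hle⟩
  have claim := key a d hd hnd adm
  intro i
  refine ⟨{x | ∃ l, l ≠ i ∧ a l ≤ a i + Finsupp.single x 1}, ?_⟩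
  apply le_antisymm
  · -- colon ⊆ span of variables
    intro p hp
    rw [Ideal.mem_colon_span_singleton] at hp
    rw [himg, mem_ideal_span_monomial_image] at hp
    rw [mem_ideal_span_X_image]
    intro b hb
    have hbmem : b + a i ∈ (p * monomial (a i) (1 : K)).support := by
      rw [MvPolynomial.mem_support_iff, coeff_mul_monomial, mul_one]
      exact MvPolynomial.mem_support_iff.mp hb
    obtain ⟨s, ⟨l, hli, rfl⟩, hle⟩ := hp _ hbmem
    obtain ⟨x, hxl, hwit⟩ := claim i l hli
    refine ⟨x, hwit, ?_⟩
    have := hle x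
    rw [Finsupp.add_apply] at this
    omega
  · -- span of variables ⊆ colon
    rw [Ideal.span_le]
    rintro _ ⟨x, ⟨l, hli, hle⟩, rfl⟩
    rw [SetLike.mem_coe, Ideal.mem_colon_span_singleton, X, monomial_mul, one_mul, himg, mono_mem]
    refine ⟨a l, ⟨l, hli, rfl⟩, ?_⟩
    rwa [add_comm]

end FHaux

/-- **Corollary 1.2 (Ficarra–Herzog).**  Let `I` be a monomial ideal generated in a single
degree `d` with linear quotients, with minimal monomial generators `u 0, …, u (m-1)`
(pairwise non-dividing monomials).  Then for every `i`, the colon ideal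
`(u_0,…,u_{i-1},u_{i+1},…,u_{m-1}) : u_i` is generated by a subset of the variables. -/
theorem colon_of_all_but_one_generated_by_variables
    {K : Type*} [Field K] {n m : ℕ} (d : ℕ)
    (u : Fin m → MvPolynomial (Fin n) K)
    (hmon : ∀ i, IsMonomialElt (u i))
    (hdeg : ∀ i, (u i).totalDegree = d)
    (hmin : ∀ i j, i ≠ j → ¬ u i ∣ u j)
    (hlq : ∃ σ : Equiv.Perm (Fin m), ∀ i : Fin m,
      genByVars ((Ideal.span ((fun j => u (σ j)) '' {j | j < i})).colon
        (Ideal.span {u (σ i)}))) :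
    ∀ i : Fin m,
      genByVars ((Ideal.span (u '' {j | j ≠ i})).colon (Ideal.span {u i})) := by
  classical
  obtain ⟨σ, hσ⟩ := hlq
  -- choose exponent vectors
  choose b hb using hmon
  set a : Fin m → (Fin n →₀ ℕ) := fun j => b (σ j) with ha
  have hu : ∀ j, u (σ j) = monomial (a j) (1 : K) := fun j => hb (σ j)
  have hd : ∀ j, FHaux.degE (a j) = d := by
    intro j
    have := hdeg (σ j)
    rw [hu j, totalDegree_monomial _ (one_ne_zero (α := K))] at this
    exact this
  have hnd : ∀ i j : Fin m, i ≠ j → ¬ a i ≤ a j := by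
    intro i j hij hle
    apply hmin (σ i) (σ j) (fun h => hij (σ.injective h))
    rw [hu i, hu j]
    exact monomial_dvd_monomial.mpr ⟨Or.inr hle, dvd_refl _⟩
  have hlq' : ∀ i : Fin m,
      genByVars ((Ideal.span ((fun j => (monomial (a j) (1 : K))) '' {j | j < i})).colon
        (Ideal.span {(monomial (a i) (1 : K))})) := by
    intro i
    have := hσ i
    rw [show (fun j => u (σ j)) = (fun j => (monomial (a j) (1 : K))) from funext hu,
      hu i] at this
    exact this
  have main := FHaux.aux a d hd hnd hlq'
  intro i
  have := main (σ.symm i)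
  have h1 : (monomial (a (σ.symm i)) (1 : K)) = u i := by
    rw [← hu (σ.symm i), Equiv.apply_symm_apply]
  have h2 : ((fun j => (monomial (a j) (1 : K))) '' {j | j ≠ σ.symm i}) = u '' {j | j ≠ i} := by
    rw [show (fun j => (monomial (a j) (1 : K))) = (fun j => u (σ j)) from (funext hu).symm]
    ext p
    simp only [Set.mem_image, Set.mem_setOf_eq]
    constructor
    · rintro ⟨j, hj, rfl⟩
      exact ⟨σ j, fun h => hj (by rw [← h, Equiv.symm_apply_apply]), rfl⟩
    · rintro ⟨j, hj, rfl⟩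
      exact ⟨σ.symm j, fun h => hj (by simpa using congrArg σ h),
        by rw [Equiv.apply_symm_apply]⟩
  rwa [h1, h2] at this
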